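/- arXiv:2208.06307 — 2 statements merged into one kernel-verified Lean document; each statement's English description precedes it below -/
import Mathlib

section
/- (Laurent–Massart upper deviation) Let X_1,…,X_m be i.i.d. N(0, σ²) random variables. Then for every t > 0, P(Σ_i X_i² − m·σ² ≥ 2σ²·√(m·t) + 2σ²·t) ≤ exp(−t). -/
set_option maxHeartbeats 1000000


open MeasureTheory ProbabilityTheory Real

lemma gauss_sq_aux {v : NNReal} (hv : 0 < (v : ℝ)) {u : ℝ} (hb : 0 < 1 - 2 * u * v) :
    Integrable (fun x => rexp (u * x ^ 2)) (gaussianReal 0 v) ∧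
    ∫ x, rexp (u * x ^ 2) ∂(gaussianReal 0 v) = Real.sqrt (1 / (1 - 2 * u * v)) := by
  have hvne : v ≠ 0 := by
    intro h; rw [h] at hv; simp at hv
  have hπ : (0:ℝ) < π := Real.pi_pos
  set b : ℝ := 1 / (2 * v) - u with hbdef
  have hb0 : 0 < b := by
    rw [hbdef, sub_pos, lt_div_iff₀ (by positivity)]
    nlinarith
  have hmeq : gaussianReal 0 v
      = volume.withDensity (fun x => ((gaussianPDFReal 0 v x).toNNReal : ENNReal)) := by
    rw [gaussianReal_of_var_ne_zero _ hvne]; rfl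
  have hfm : Measurable (fun x => (gaussianPDFReal 0 v x).toNNReal) :=
    (measurable_gaussianPDFReal 0 v).real_toNNReal
  have hkey : ∀ x : ℝ, gaussianPDFReal 0 v x * rexp (u * x ^ 2)
      = (Real.sqrt (2 * π * v))⁻¹ * rexp (-b * x ^ 2) := by
    intro x
    rw [gaussianPDFReal, mul_assoc, ← Real.exp_add]
    congr 2
    rw [hbdef]
    field_simp [hv.ne']
    ring
  have hsmul : ∀ x : ℝ, ((gaussianPDFReal 0 v x).toNNReal : ℝ) • rexp (u * x ^ 2)
      = (Real.sqrt (2 * π * v))⁻¹ * rexp (-b * x ^ 2) := by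
    intro x
    rw [smul_eq_mul, Real.coe_toNNReal _ (gaussianPDFReal_nonneg _ _ _), hkey]
  constructor
  · rw [hmeq]
    rw [integrable_withDensity_iff_integrable_smul hfm]
    have : (fun x => (gaussianPDFReal 0 v x).toNNReal • rexp (u * x ^ 2))
        = fun x => (Real.sqrt (2 * π * v))⁻¹ * rexp (-b * x ^ 2) := by
      funext x
      rw [NNReal.smul_def, hsmul]
    rw [this]
    exact (integrable_exp_neg_mul_sq hb0).const_mul _
  · rw [hmeq, integral_withDensity_eq_integral_smul hfm]
    have : ∀ x : ℝ, (gaussianPDFReal 0 v x).toNNReal • rexp (u * x ^ 2)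
        = (Real.sqrt (2 * π * v))⁻¹ * rexp (-b * x ^ 2) := by
      intro x; rw [NNReal.smul_def, hsmul]
    rw [integral_congr_ae (Filter.Eventually.of_forall this), integral_const_mul,
      integral_gaussian]
    rw [← Real.sqrt_inv, ← Real.sqrt_mul (by positivity)]
    congr 1
    have h2vb : 2 * (v:ℝ) * b = 1 - 2 * u * v := by
      rw [hbdef]
      field_simp
    rw [← h2vb]
    field_simp [hv.ne', hπ.ne', hb0.ne']

theorem stmt_5 {Ω : Type*} [MeasurableSpace Ω] (μ : Measure Ω) [IsProbabilityMeasure μ]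
    (m : ℕ) (X : Fin m → Ω → ℝ) (v : NNReal) (hv : 0 < v)
    (hmeas : ∀ i, Measurable (X i))
    (hindep : iIndepFun X μ)
    (hgauss : ∀ i, μ.map (X i) = gaussianReal 0 v)
    (t : ℝ) (ht : 0 < t) :
    μ {ω | (∑ i, X i ω ^ 2) - m * (v : ℝ) ≥
        2 * (v : ℝ) * Real.sqrt (m * t) + 2 * (v : ℝ) * t} ≤
      ENNReal.ofReal (Real.exp (-t)) := by
  have hvR : (0:ℝ) < (v:ℝ) := by exact_mod_cast hv
  rcases Nat.eq_zero_or_pos m with hm | hm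
  · subst hm
    have hempty : {ω : Ω | (∑ i, X i ω ^ 2) - (0:ℕ) * (v : ℝ) ≥
        2 * (v : ℝ) * Real.sqrt ((0:ℕ) * t) + 2 * (v : ℝ) * t} = ∅ := by
      ext ω
      simp only [Set.mem_setOf_eq, Set.mem_empty_iff_false, iff_false, not_le, ge_iff_le]
      simp only [Finset.univ_eq_empty, Finset.sum_empty, Nat.cast_zero, zero_mul, sub_zero,
        Real.sqrt_zero, mul_zero, zero_add]
      nlinarith [Real.sqrt_nonneg ((0:ℝ)*t)]
    rw [hempty]
    simp
  -- main case
  have hmR : (0:ℝ) < (m:ℝ) := by exact_mod_cast hm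
  set s : ℝ := Real.sqrt (m * t) with hsdef
  have hs0 : 0 < s := Real.sqrt_pos.mpr (by positivity)
  have hs2 : s ^ 2 = m * t := Real.sq_sqrt (by positivity)
  set ε : ℝ := m * v + 2 * v * s + 2 * v * t with hεdef
  have hε0 : 0 < ε := by positivity
  set u : ℝ := (s + t) / ε with hudef
  have hu0 : 0 ≤ u := by positivity
  have huε : u * ε = s + t := div_mul_cancel₀ _ hε0.ne'
  have hb : 1 - 2 * u * v = m * v / ε := by
    rw [hudef]
    field_simp
    ring
  have hb0 : 0 < 1 - 2 * u * (v:ℝ) := by rw [hb]; positivity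
  set Y : Fin m → Ω → ℝ := fun i ω => X i ω ^ 2 with hYdef
  have hYmeas : ∀ i, Measurable (Y i) := fun i => (hmeas i).pow_const 2
  have hYindep : iIndepFun Y μ :=
    hindep.comp (fun _ (x : ℝ) => x ^ 2) (fun _ => measurable_id.pow_const 2)
  have hint : ∀ i, Integrable (fun ω => rexp (u * Y i ω)) μ := by
    intro i
    have h1 := (gauss_sq_aux hvR hb0).1
    rw [← hgauss i] at h1
    have h2 := (integrable_map_measure
      (Continuous.aestronglyMeasurable (by continuity)) (hmeas i).aemeasurable).mp h1
    exact h2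
  have hmgf : ∀ i, mgf (Y i) μ u = Real.sqrt (1 / (1 - 2 * u * v)) := by
    intro i
    rw [mgf]
    have h1 : ∫ ω, rexp (u * Y i ω) ∂μ = ∫ x, rexp (u * x ^ 2) ∂(μ.map (X i)) := by
      rw [integral_map (hmeas i).aemeasurable
        (Continuous.aestronglyMeasurable (by continuity))]
    rw [h1, hgauss i, (gauss_sq_aux hvR hb0).2]
  have hsum : ∀ ω, (∑ i, Y i) ω = ∑ i, X i ω ^ 2 := by
    intro ω; simp [hYdef]
  have hset : {ω : Ω | (∑ i, X i ω ^ 2) - m * (v : ℝ) ≥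
      2 * (v : ℝ) * Real.sqrt (m * t) + 2 * (v : ℝ) * t}
      = {ω : Ω | ε ≤ (∑ i, Y i) ω} := by
    ext ω
    simp only [Set.mem_setOf_eq, ge_iff_le, hsum, ← hsdef]
    constructor <;> intro h <;> [skip; skip] <;> rw [hεdef] at * <;> linarith
  have hSint : Integrable (fun ω => rexp (u * (∑ i, Y i) ω)) μ :=
    hYindep.integrable_exp_mul_sum hYmeas (fun i _ => hint i)
  have hchern := measure_ge_le_exp_mul_mgf (X := ∑ i, Y i) (μ := μ) ε hu0 hSint
  have hmgfsum : mgf (∑ i, Y i) μ u = Real.sqrt (1 / (1 - 2 * u * v)) ^ m := by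
    rw [hYindep.mgf_sum hYmeas]
    simp [hmgf]
  -- numeric bound
  set y : ℝ := 2 * s / m with hydef
  have hy0 : 0 ≤ y := by positivity
  have hc : 1 / (1 - 2 * u * (v:ℝ)) ≤ rexp y := by
    have hy2 : y ^ 2 / 2 = 2 * t / m := by
      rw [hydef, div_pow, mul_pow]
      rw [show (2:ℝ) ^ 2 * s ^ 2 = 4 * (m * t) by rw [hs2]; ring]
      field_simp
      ring
    have h1 : 1 / (1 - 2 * u * (v:ℝ)) = 1 + y + y ^ 2 / 2 := by
      rw [hb, one_div_div, hy2, hydef, hεdef]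
      field_simp
    rw [h1]
    exact Real.quadratic_le_exp_of_nonneg hy0
  have hsqrt : Real.sqrt (1 / (1 - 2 * u * (v:ℝ))) ≤ rexp (y / 2) := by
    calc Real.sqrt (1 / (1 - 2 * u * (v:ℝ))) ≤ Real.sqrt (rexp y) := Real.sqrt_le_sqrt hc
    _ = rexp (y / 2) := (Real.exp_half y).symm
  have hpow : Real.sqrt (1 / (1 - 2 * u * (v:ℝ))) ^ m ≤ rexp s := by
    calc Real.sqrt (1 / (1 - 2 * u * (v:ℝ))) ^ m ≤ rexp (y / 2) ^ m :=
      pow_le_pow_left₀ (Real.sqrt_nonneg _) hsqrt m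
    _ = rexp (m * (y / 2)) := by rw [← Real.exp_nat_mul]
    _ = rexp s := by
        congr 1
        rw [hydef]
        field_simp
  have hfinal : rexp (-u * ε) * mgf (∑ i, Y i) μ u ≤ rexp (-t) := by
    rw [hmgfsum]
    calc rexp (-u * ε) * Real.sqrt (1 / (1 - 2 * u * (v:ℝ))) ^ m
        ≤ rexp (-u * ε) * rexp s := by
          exact mul_le_mul_of_nonneg_left hpow (Real.exp_nonneg _)
    _ = rexp (-u * ε + s) := by rw [← Real.exp_add]
    _ = rexp (-t) := by rw [neg_mul, huε]; ring_nf
  rw [hset]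
  rw [ENNReal.le_ofReal_iff_toReal_le (measure_ne_top μ _) (Real.exp_nonneg _)]
  exact hchern.trans hfinal
end

section
/- (Gaussian product tail) Let x_1,…,x_P and y_1,…,y_P be 2P jointly independent real N(0,σ²) random variables. Then for all t > 0, P( |Σ_{i=1}^P x_i·y_i| ≥ t ) ≤ 2·exp( −t² / (4σ²(Pσ² + t/2)) ). -/
open MeasureTheory ProbabilityTheory

section aux
open Real


lemma quad_integrable {b : ℝ} (hb : 0 < b) (c : ℝ) :
    Integrable (fun x : ℝ => Real.exp (-b * x ^ 2 + c * x)) := by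
  have h : ∀ x : ℝ, -b * x ^ 2 + c * x = -b * (x - c / (2 * b)) ^ 2 + c ^ 2 / (4 * b) := by
    intro x; field_simp; ring
  simp_rw [h, Real.exp_add]
  exact (((integrable_exp_neg_mul_sq hb).comp_sub_right (c / (2 * b)))).mul_const _

lemma quad_integral {b : ℝ} (hb : 0 < b) (c : ℝ) :
    ∫ x : ℝ, Real.exp (-b * x ^ 2 + c * x) = Real.sqrt (π / b) * Real.exp (c ^ 2 / (4 * b)) := by
  have h : ∀ x : ℝ, -b * x ^ 2 + c * x = -b * (x - c / (2 * b)) ^ 2 + c ^ 2 / (4 * b) := by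
    intro x; field_simp; ring
  simp_rw [h, Real.exp_add]
  rw [integral_mul_const,
    integral_sub_right_eq_self (μ := volume) (fun x : ℝ => Real.exp (-b * x ^ 2)) (c / (2 * b)),
    integral_gaussian]


lemma gauss_int_eq {v : NNReal} (hv : v ≠ 0) (f : ℝ → ℝ) :
    ∫ x, f x ∂(gaussianReal 0 v) = ∫ x, gaussianPDFReal 0 v x * f x := by
  rw [gaussianReal_of_var_ne_zero _ hv]
  have : gaussianPDF 0 v = fun x => ((gaussianPDFReal 0 v x).toNNReal : ENNReal) := by
    ext x; simp [gaussianPDF, ENNReal.ofReal]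
  rw [this, integral_withDensity_eq_integral_smul
    ((measurable_gaussianPDFReal 0 v).real_toNNReal)]
  congr 1; ext x
  simp [NNReal.smul_def, Real.coe_toNNReal _ (gaussianPDFReal_nonneg 0 v x)]

lemma gauss_integrable_iff {v : NNReal} (hv : v ≠ 0) (f : ℝ → ℝ) :
    Integrable f (gaussianReal 0 v) ↔ Integrable (fun x => gaussianPDFReal 0 v x * f x) := by
  rw [gaussianReal_of_var_ne_zero _ hv]
  have h1 : gaussianPDF 0 v = fun x => ((gaussianPDFReal 0 v x).toNNReal : ENNReal) := by
    ext x; simp [gaussianPDF, ENNReal.ofReal]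
  rw [h1, integrable_withDensity_iff_integrable_smul
    ((measurable_gaussianPDFReal 0 v).real_toNNReal)]
  constructor <;> intro h <;> refine h.congr (Filter.Eventually.of_forall fun x => ?_) <;>
    simp [NNReal.smul_def, Real.coe_toNNReal _ (gaussianPDFReal_nonneg 0 v x)]


lemma gauss_pdf_mul {v : NNReal} (hv : v ≠ 0) (a s : ℝ) (x : ℝ) :
    gaussianPDFReal 0 v x * Real.exp (a * x ^ 2 + s * x)
      = (Real.sqrt (2 * π * v))⁻¹ * Real.exp (-((2 * (v:ℝ))⁻¹ - a) * x ^ 2 + s * x) := by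
  have hV : (0:ℝ) < v := by positivity
  rw [gaussianPDFReal_def]
  rw [mul_assoc, ← Real.exp_add]
  congr 2
  field_simp
  ring

lemma hb_pos {v : NNReal} (hv : v ≠ 0) {a : ℝ} (h : 2 * a * v < 1) :
    0 < (2 * (v:ℝ))⁻¹ - a := by
  have hV : (0:ℝ) < v := by positivity
  have h2 : a < 1 / (2 * (v:ℝ)) := (lt_div_iff₀ (by positivity)).mpr (by nlinarith)
  rw [sub_pos, ← one_div]
  exact h2

lemma gauss_quad_integrable {v : NNReal} (hv : v ≠ 0) {a : ℝ} (s : ℝ) (h : 2 * a * v < 1) :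
    Integrable (fun x => Real.exp (a * x ^ 2 + s * x)) (gaussianReal 0 v) := by
  rw [gauss_integrable_iff hv]
  exact ((quad_integrable (hb_pos hv h) s).const_mul _).congr
    (Filter.Eventually.of_forall fun x => (gauss_pdf_mul hv a s x).symm)

lemma gauss_quad_integral {v : NNReal} (hv : v ≠ 0) {a : ℝ} (s : ℝ) (h : 2 * a * v < 1) :
    ∫ x, Real.exp (a * x ^ 2 + s * x) ∂(gaussianReal 0 v)
      = (Real.sqrt (1 - 2 * a * v))⁻¹ * Real.exp (v * s ^ 2 / (2 * (1 - 2 * a * v))) := by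
  have hV : (0:ℝ) < v := by positivity
  have hb := hb_pos hv h
  rw [gauss_int_eq hv]
  simp_rw [gauss_pdf_mul hv a s]
  rw [integral_const_mul, quad_integral hb s]
  have h1 : 1 - 2 * a * (v:ℝ) = 2 * v * ((2 * (v:ℝ))⁻¹ - a) := by field_simp
  have h2 : π / ((2 * (v:ℝ))⁻¹ - a) = (2 * π * (v:ℝ)) / (1 - 2 * a * v) := by
    rw [h1]; field_simp
  have h3 : s ^ 2 / (4 * ((2 * (v:ℝ))⁻¹ - a)) = (v:ℝ) * s ^ 2 / (2 * (1 - 2 * a * v)) := by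
    rw [h1, div_eq_div_iff (by positivity) (by positivity)]; ring
  have h4 : Real.sqrt (2 * π * (v:ℝ)) ≠ 0 := by positivity
  have h5 : Real.sqrt (1 - 2 * a * (v:ℝ)) ≠ 0 := by
    rw [h1]; positivity
  rw [h2, Real.sqrt_div (by positivity), h3]
  field_simp


lemma gauss_mgf {v : NNReal} (hv : v ≠ 0) (s : ℝ) :
    ∫ x, Real.exp (s * x) ∂(gaussianReal 0 v) = Real.exp (v * s ^ 2 / 2) := by
  have h := gauss_quad_integral hv (a := 0) s (by norm_num)
  simpa using h

lemma gauss_mgf_integrable {v : NNReal} (hv : v ≠ 0) (s : ℝ) :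
    Integrable (fun x => Real.exp (s * x)) (gaussianReal 0 v) := by
  have h := gauss_quad_integrable hv (a := 0) s (by norm_num)
  simpa using h

lemma gauss_sq_integral {v : NNReal} (hv : v ≠ 0) {a : ℝ} (h : 2 * a * v < 1) :
    ∫ x, Real.exp (a * x ^ 2) ∂(gaussianReal 0 v) = (Real.sqrt (1 - 2 * a * v))⁻¹ := by
  have h2 := gauss_quad_integral hv (a := a) 0 h
  simpa using h2

lemma gauss_sq_integrable {v : NNReal} (hv : v ≠ 0) {a : ℝ} (h : 2 * a * v < 1) :
    Integrable (fun x => Real.exp (a * x ^ 2)) (gaussianReal 0 v) := by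
  have h2 := gauss_quad_integrable hv (a := a) 0 h
  simpa using h2

section prodmgf
variable {Ω : Type*} [MeasurableSpace Ω] {μ : Measure Ω} [IsProbabilityMeasure μ]
  {v : NNReal} {X Y : Ω → ℝ} {θ : ℝ}

lemma prod_integrable_aux (hv : v ≠ 0) (hθ : θ ^ 2 * (v:ℝ) ^ 2 < 1) :
    Integrable (fun p : ℝ × ℝ => Real.exp (θ * (p.1 * p.2)))
      ((gaussianReal 0 v).prod (gaussianReal 0 v)) := by
  have hmeas : AEStronglyMeasurable (fun p : ℝ × ℝ => Real.exp (θ * (p.1 * p.2)))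
      ((gaussianReal 0 v).prod (gaussianReal 0 v)) := by
    apply Measurable.aestronglyMeasurable; fun_prop
  rw [integrable_prod_iff hmeas]
  constructor
  · refine Filter.Eventually.of_forall fun x => ?_
    simpa [mul_assoc] using gauss_mgf_integrable hv (θ * x)
  · have hval : ∀ x : ℝ, (∫ y, ‖Real.exp (θ * (x * y))‖ ∂(gaussianReal 0 v))
        = Real.exp (((v:ℝ) * θ ^ 2 / 2) * x ^ 2) := by
      intro x
      have : ∀ y : ℝ, ‖Real.exp (θ * (x * y))‖ = Real.exp ((θ * x) * y) := by
        intro y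
        rw [Real.norm_eq_abs, abs_of_pos (Real.exp_pos _)]
        ring_nf
      simp_rw [this, gauss_mgf hv (θ * x)]
      congr 1
      ring
    simp_rw [hval]
    exact gauss_sq_integrable hv (by nlinarith [sq_nonneg ((v:ℝ) * θ)])

lemma prod_integral_aux (hv : v ≠ 0) (hθ : θ ^ 2 * (v:ℝ) ^ 2 < 1) :
    ∫ p, Real.exp (θ * (p.1 * p.2)) ∂((gaussianReal 0 v).prod (gaussianReal 0 v))
      = (Real.sqrt (1 - θ ^ 2 * (v:ℝ) ^ 2))⁻¹ := by
  rw [integral_prod _ (prod_integrable_aux hv hθ)]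
  have hval : ∀ x : ℝ, (∫ y, Real.exp (θ * (x * y)) ∂(gaussianReal 0 v))
      = Real.exp (((v:ℝ) * θ ^ 2 / 2) * x ^ 2) := by
    intro x
    have : ∀ y : ℝ, Real.exp (θ * (x * y)) = Real.exp ((θ * x) * y) := by
      intro y; ring_nf
    simp_rw [this, gauss_mgf hv (θ * x)]
    congr 1
    ring
  simp_rw [hval]
  rw [gauss_sq_integral hv (by nlinarith [sq_nonneg ((v:ℝ) * θ)])]
  congr 2
  ring

lemma prod_map_eq (hX : Measurable X) (hY : Measurable Y) (hindep : IndepFun X Y μ)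
    (hgX : μ.map X = gaussianReal 0 v) (hgY : μ.map Y = gaussianReal 0 v) :
    μ.map (fun ω => (X ω, Y ω)) = (gaussianReal 0 v).prod (gaussianReal 0 v) := by
  rw [(indepFun_iff_map_prod_eq_prod_map_map hX.aemeasurable hY.aemeasurable).mp hindep,
    hgX, hgY]

lemma prod_mgf_integrable (hv : v ≠ 0) (hX : Measurable X) (hY : Measurable Y)
    (hindep : IndepFun X Y μ) (hgX : μ.map X = gaussianReal 0 v)
    (hgY : μ.map Y = gaussianReal 0 v) (hθ : θ ^ 2 * (v:ℝ) ^ 2 < 1) :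
    Integrable (fun ω => Real.exp (θ * (X ω * Y ω))) μ := by
  have hpm : Measurable (fun ω => (X ω, Y ω)) := hX.prodMk hY
  have h := prod_integrable_aux (v := v) hv hθ
  rw [← prod_map_eq hX hY hindep hgX hgY] at h
  have h2 := (integrable_map_measure h.aestronglyMeasurable hpm.aemeasurable).mp h
  simpa [Function.comp_def] using h2

lemma prod_mgf_integral (hv : v ≠ 0) (hX : Measurable X) (hY : Measurable Y)
    (hindep : IndepFun X Y μ) (hgX : μ.map X = gaussianReal 0 v)
    (hgY : μ.map Y = gaussianReal 0 v) (hθ : θ ^ 2 * (v:ℝ) ^ 2 < 1) :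
    ∫ ω, Real.exp (θ * (X ω * Y ω)) ∂μ = (Real.sqrt (1 - θ ^ 2 * (v:ℝ) ^ 2))⁻¹ := by
  have hpm : Measurable (fun ω => (X ω, Y ω)) := hX.prodMk hY
  rw [← prod_integral_aux (v := v) hv hθ, ← prod_map_eq hX hY hindep hgX hgY,
    integral_map hpm.aemeasurable]
  apply Measurable.aestronglyMeasurable; fun_prop

end prodmgf


section sums
variable {Ω : Type*} [MeasurableSpace Ω] {μ : Measure Ω} [IsProbabilityMeasure μ]
  {P : ℕ} {x y : Fin P → Ω → ℝ}

lemma indep_prod_sum (hmeas : ∀ i, Measurable (x i)) (hmeas' : ∀ i, Measurable (y i))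
    (hindep : iIndepFun (Sum.elim x y) μ)
    (s : Finset (Fin P)) {i : Fin P} (hi : i ∉ s) :
    IndepFun (fun ω => x i ω * y i ω) (fun ω => ∑ j ∈ s, x j ω * y j ω) μ := by
  classical
  have hm : ∀ j : Fin P ⊕ Fin P, Measurable (Sum.elim x y j) := by
    rintro (j | j)
    exacts [hmeas j, hmeas' j]
  set S : Finset (Fin P ⊕ Fin P) := {Sum.inl i, Sum.inr i} with hS
  set T : Finset (Fin P ⊕ Fin P) := s.image Sum.inl ∪ s.image Sum.inr with hT
  have hST : Disjoint S T := by
    rw [Finset.disjoint_left]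
    intro a haS haT
    simp only [hS, hT, Finset.mem_insert, Finset.mem_singleton, Finset.mem_union,
      Finset.mem_image] at haS haT
    rcases haS with rfl | rfl <;> rcases haT with ⟨j, hj, hje⟩ | ⟨j, hj, hje⟩ <;>
      simp_all <;> exact hi (hje ▸ hj)
  have h := hindep.indepFun_finset S T hST hm
  let g1 : (∀ j : (S : Finset (Fin P ⊕ Fin P)), ℝ) → ℝ := fun w =>
    w ⟨Sum.inl i, by simp [hS]⟩ * w ⟨Sum.inr i, by simp [hS]⟩
  let g2 : (∀ j : (T : Finset (Fin P ⊕ Fin P)), ℝ) → ℝ := fun w =>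
    ∑ j ∈ s.attach, w ⟨Sum.inl j.1, by simp [hT, j.2]⟩ * w ⟨Sum.inr j.1, by simp [hT, j.2]⟩
  have hg1 : Measurable g1 := (measurable_pi_apply _).mul (measurable_pi_apply _)
  have hg2 : Measurable g2 :=
    Finset.measurable_sum _ fun j _ => (measurable_pi_apply _).mul (measurable_pi_apply _)
  have hcomp := h.comp hg1 hg2
  have e1 : (g1 ∘ fun a (j : (S : Finset (Fin P ⊕ Fin P))) => Sum.elim x y j a)
      = fun ω => x i ω * y i ω := rfl
  have e2 : (g2 ∘ fun a (j : (T : Finset (Fin P ⊕ Fin P))) => Sum.elim x y j a)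
      = fun ω => ∑ j ∈ s, x j ω * y j ω := by
    funext a
    simp only [Function.comp_apply, g2, Sum.elim_inl, Sum.elim_inr]
    exact Finset.sum_attach s fun j => x j a * y j a
  rwa [e1, e2] at hcomp

lemma sum_prod_mgf (hmeas : ∀ i, Measurable (x i)) (hmeas' : ∀ i, Measurable (y i))
    (hindep : iIndepFun (Sum.elim x y) μ) (θ : ℝ)
    (hint : ∀ i, Integrable (fun ω => Real.exp (θ * (x i ω * y i ω))) μ)
    (s : Finset (Fin P)) :
    Integrable (fun ω => Real.exp (θ * ∑ j ∈ s, x j ω * y j ω)) μ ∧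
      ∫ ω, Real.exp (θ * ∑ j ∈ s, x j ω * y j ω) ∂μ
        = ∏ j ∈ s, ∫ ω, Real.exp (θ * (x j ω * y j ω)) ∂μ := by
  classical
  induction s using Finset.induction_on with
  | empty => simp
  | @insert i s hi IH =>
    have hind := indep_prod_sum hmeas hmeas' hindep s hi
    have hintsum := IH.1
    have hZ : Integrable (fun ω => Real.exp (θ * (x i ω * y i ω))) μ := hint i
    have hia : Integrable (fun ω => Real.exp (θ *
        ((fun ω => x i ω * y i ω) + fun ω => ∑ j ∈ s, x j ω * y j ω) ω)) μ :=
      hind.integrable_exp_mul_add hZ hintsum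
    have hmg := hind.mgf_add (t := θ) hZ.aestronglyMeasurable hintsum.aestronglyMeasurable
    constructor
    · refine hia.congr (Filter.Eventually.of_forall fun ω => ?_)
      simp [Finset.sum_insert hi]
    · have : (fun ω => Real.exp (θ * ∑ j ∈ insert i s, x j ω * y j ω))
          = fun ω => Real.exp (θ *
            ((fun ω => x i ω * y i ω) + fun ω => ∑ j ∈ s, x j ω * y j ω) ω) := by
        funext ω; simp [Finset.sum_insert hi]
      rw [this]
      have h2 := hmg
      simp only [mgf] at h2
      rw [h2, Finset.prod_insert hi, IH.2]

end sums


lemma final_core {V t : ℝ} {P : ℕ} (hP : 1 ≤ P) (hV : 0 < V) (ht : 0 < t) :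
    Real.exp (-(t / (V * (2 * P * V + t))) * t)
        * ((Real.sqrt (1 - (t / (V * (2 * P * V + t))) ^ 2 * V ^ 2))⁻¹) ^ P
      ≤ Real.exp (-t ^ 2 / (4 * V * ((P : ℝ) * V + t / 2))) := by
  have hPR : (1 : ℝ) ≤ (P : ℝ) := by exact_mod_cast hP
  have hPpos : (0 : ℝ) < P := by linarith
  set D : ℝ := 2 * P * V + t with hD
  have hDpos : 0 < D := by positivity
  have htD : t < D := by nlinarith
  set u : ℝ := t / D with hu
  have hu0 : 0 < u := by positivity
  have hu1 : u < 1 := (div_lt_one hDpos).mpr htD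
  have huD : u * D = t := div_mul_cancel₀ t hDpos.ne'
  have hz : (0:ℝ) < 1 - u ^ 2 := by nlinarith
  have hzu : (0:ℝ) < 1 - u := by linarith
  have hDz : D * (1 - u) = 2 * P * V := by
    have : D * u = t := by rw [mul_comm]; exact huD
    nlinarith [this]
  set c : ℝ := u * t / (4 * P * V) with hc
  have hcpos : 0 < c := by positivity
  -- the sqrt argument equals 1 - u ^ 2
  have harg : 1 - (t / (V * D)) ^ 2 * V ^ 2 = 1 - u ^ 2 := by
    rw [hu]; congr 1; field_simp
  rw [harg]
  -- key1 : (1 - u^2)⁻¹ ≤ exp (2 c)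
  have key0 : (1 - u ^ 2)⁻¹ - 1 ≤ 2 * c := by
    have h1 : (1 - u ^ 2)⁻¹ - 1 = u ^ 2 / (1 - u ^ 2) := by
      field_simp; ring
    have hcc : 2 * c = u * t / (2 * (P:ℝ) * V) := by rw [hc]; field_simp; ring
    rw [h1, hcc, div_le_div_iff₀ hz (by positivity)]
    rw [← huD, ← hDz]
    nlinarith [mul_nonneg (mul_nonneg (mul_nonneg (sq_nonneg u) hDpos.le) hu0.le) hzu.le]
  have key1 : (1 - u ^ 2)⁻¹ ≤ Real.exp (2 * c) := by
    have h2 := Real.add_one_le_exp ((1 - u ^ 2)⁻¹ - 1)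
    have h3 : (1 - u ^ 2)⁻¹ ≤ Real.exp ((1 - u ^ 2)⁻¹ - 1) := by linarith
    exact h3.trans (Real.exp_le_exp.mpr key0)
  -- key2 : (sqrt (1 - u^2))⁻¹ ≤ exp c
  have key2 : (Real.sqrt (1 - u ^ 2))⁻¹ ≤ Real.exp c := by
    rw [← Real.sqrt_inv]
    have h4 : Real.sqrt (Real.exp (2 * c)) = Real.exp c := by
      rw [show (2:ℝ) * c = c + c by ring, Real.exp_add, Real.sqrt_mul_self (Real.exp_pos c).le]
    calc Real.sqrt (1 - u ^ 2)⁻¹ ≤ Real.sqrt (Real.exp (2 * c)) := Real.sqrt_le_sqrt key1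
      _ = Real.exp c := h4
  have key3 : ((Real.sqrt (1 - u ^ 2))⁻¹) ^ P ≤ Real.exp ((P : ℝ) * c) := by
    calc ((Real.sqrt (1 - u ^ 2))⁻¹) ^ P ≤ (Real.exp c) ^ P :=
          pow_le_pow_left₀ (by positivity) key2 P
      _ = Real.exp ((P : ℝ) * c) := by rw [← Real.exp_nat_mul]
  have key4 : Real.exp (-(t / (V * D)) * t) * ((Real.sqrt (1 - u ^ 2))⁻¹) ^ P
      ≤ Real.exp (-(t / (V * D)) * t + (P : ℝ) * c) := by
    rw [Real.exp_add]
    exact mul_le_mul_of_nonneg_left key3 (Real.exp_pos _).le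
  refine key4.trans (Real.exp_le_exp.mpr ?_)
  -- arithmetic: -(t/(V D)) t + P c ≤ -t²/(4V(PV + t/2))
  set q : ℝ := t ^ 2 / (V * D) with hq
  have hqpos : 0 < q := by positivity
  have e1 : -(t / (V * D)) * t = -q := by rw [hq]; ring
  have e2 : (P : ℝ) * c = q / 4 := by
    rw [hc, hu, hq]
    field_simp
  have e3 : -t ^ 2 / (4 * V * ((P : ℝ) * V + t / 2)) = -(q / 2) := by
    rw [hq, hD]
    have h6 : (0:ℝ) < (P : ℝ) * V + t / 2 := by positivity
    field_simp
    ring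
  rw [e1, e2, e3]
  linarith

end aux

section main
open Real

theorem stmt_8 {Ω : Type*} [MeasurableSpace Ω] (μ : Measure Ω) [IsProbabilityMeasure μ]
    (P : ℕ) (x y : Fin P → Ω → ℝ) (v : NNReal) (hv : 0 < v)
    (hmeas : ∀ i, Measurable (x i)) (hmeas' : ∀ i, Measurable (y i))
    (hindep : iIndepFun (Sum.elim x y) μ)
    (hgauss : ∀ i, μ.map (x i) = gaussianReal 0 v)
    (hgauss' : ∀ i, μ.map (y i) = gaussianReal 0 v)
    (t : ℝ) (ht : 0 < t) :
    μ {ω | |∑ i, x i ω * y i ω| ≥ t} ≤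
      ENNReal.ofReal (2 * Real.exp (-t ^ 2 / (4 * (v : ℝ) * (P * (v : ℝ) + t / 2)))) := by
  have hvne : v ≠ 0 := hv.ne'
  have hV : (0:ℝ) < v := hv
  rcases Nat.eq_zero_or_pos P with hP0 | hPpos
  · subst hP0
    have hset : {ω : Ω | |∑ i : Fin 0, x i ω * y i ω| ≥ t} = ∅ := by
      ext ω
      simp only [Finset.univ_eq_empty, Finset.sum_empty, abs_zero, ge_iff_le,
        Set.mem_setOf_eq, Set.mem_empty_iff_false, iff_false, not_le]
      exact ht
    rw [hset]
    simp
  · -- main case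
    set S : Ω → ℝ := fun ω => ∑ i, x i ω * y i ω with hSdef
    set θ : ℝ := t / ((v:ℝ) * (2 * P * (v:ℝ) + t)) with hθdef
    have hPR : (1:ℝ) ≤ (P:ℝ) := by exact_mod_cast hPpos
    have hDpos : (0:ℝ) < (v:ℝ) * (2 * P * (v:ℝ) + t) := by positivity
    have hθpos : 0 < θ := by positivity
    have hθvlt : θ * (v:ℝ) < 1 := by
      have h1 : θ * (v:ℝ) = t / (2 * P * (v:ℝ) + t) := by
        rw [hθdef]; field_simp
      rw [h1, div_lt_one (by positivity)]
      nlinarith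
    have hθv : θ ^ 2 * (v:ℝ) ^ 2 < 1 := by
      have : θ ^ 2 * (v:ℝ) ^ 2 = (θ * v) ^ 2 := by ring
      rw [this]
      exact pow_lt_one₀ (by positivity) hθvlt (by norm_num)
    have hθv' : (-θ) ^ 2 * (v:ℝ) ^ 2 < 1 := by rwa [neg_sq]
    have hpair : ∀ i : Fin P, IndepFun (x i) (y i) μ := fun i =>
      hindep.indepFun (show (Sum.inl i : Fin P ⊕ Fin P) ≠ Sum.inr i by simp)
    -- per-factor facts
    have hint : ∀ θ' : ℝ, θ' ^ 2 * (v:ℝ) ^ 2 < 1 →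
        ∀ i, Integrable (fun ω => Real.exp (θ' * (x i ω * y i ω))) μ := fun θ' hθ' i =>
      prod_mgf_integrable hvne (hmeas i) (hmeas' i) (hpair i) (hgauss i) (hgauss' i) hθ'
    have hval : ∀ θ' : ℝ, θ' ^ 2 * (v:ℝ) ^ 2 < 1 →
        ∀ i : Fin P, ∫ ω, Real.exp (θ' * (x i ω * y i ω)) ∂μ
          = (Real.sqrt (1 - θ' ^ 2 * (v:ℝ) ^ 2))⁻¹ := fun θ' hθ' i =>
      prod_mgf_integral hvne (hmeas i) (hmeas' i) (hpair i) (hgauss i) (hgauss' i) hθ'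
    -- mgf of the sum
    have hsum : ∀ θ' : ℝ, θ' ^ 2 * (v:ℝ) ^ 2 < 1 →
        Integrable (fun ω => Real.exp (θ' * S ω)) μ ∧
          mgf S μ θ' = ((Real.sqrt (1 - θ' ^ 2 * (v:ℝ) ^ 2))⁻¹) ^ P := by
      intro θ' hθ'
      obtain ⟨h1, h2⟩ := sum_prod_mgf hmeas hmeas' hindep θ' (hint θ' hθ') Finset.univ
      refine ⟨h1, ?_⟩
      have h3 : mgf S μ θ' = ∫ ω, Real.exp (θ' * S ω) ∂μ := rfl
      rw [h3, hSdef]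
      rw [h2]
      rw [Finset.prod_congr rfl fun i _ => hval θ' hθ' i, Finset.prod_const,
        Finset.card_univ, Fintype.card_fin]
    obtain ⟨hintθ, hmgfθ⟩ := hsum θ hθv
    obtain ⟨hintθ', hmgfθ'⟩ := hsum (-θ) hθv'
    set M : ℝ := (Real.sqrt (1 - θ ^ 2 * (v:ℝ) ^ 2))⁻¹ with hM
    have hMnn : 0 ≤ M := by positivity
    have hmgfθ'2 : mgf S μ (-θ) = M ^ P := by
      rw [hmgfθ', hM, neg_sq]
    -- Chernoff bounds
    have hch1 := measure_ge_le_exp_mul_mgf (μ := μ) (X := S) t hθpos.le hintθ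
    have hch2 := measure_le_le_exp_mul_mgf (μ := μ) (X := S) (-t)
      (neg_nonpos.mpr hθpos.le) hintθ'
    rw [hmgfθ] at hch1
    rw [hmgfθ'2] at hch2
    have hexp2 : -(-θ) * (-t) = -θ * t := by ring
    rw [hexp2] at hch2
    set K : ℝ := Real.exp (-θ * t) * M ^ P with hK
    have hKnn : 0 ≤ K := by positivity
    -- split the event
    have hsubset : {ω | |S ω| ≥ t} ⊆ {ω | t ≤ S ω} ∪ {ω | S ω ≤ -t} := by
      intro ω hω
      have hω' : t ≤ |S ω| := hω
      rcases le_abs.mp hω' with h | h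
      · exact Or.inl h
      · exact Or.inr (show S ω ≤ -t by linarith)
    have hbound : μ {ω | |S ω| ≥ t} ≤ ENNReal.ofReal (2 * K) := by
      calc μ {ω | |S ω| ≥ t} ≤ μ ({ω | t ≤ S ω} ∪ {ω | S ω ≤ -t}) := measure_mono hsubset
        _ ≤ μ {ω | t ≤ S ω} + μ {ω | S ω ≤ -t} := measure_union_le _ _
        _ ≤ ENNReal.ofReal K + ENNReal.ofReal K := by
            gcongr
            · rw [← ENNReal.ofReal_toReal (measure_ne_top μ {ω | t ≤ S ω})]
              exact ENNReal.ofReal_le_ofReal hch1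
            · rw [← ENNReal.ofReal_toReal (measure_ne_top μ {ω | S ω ≤ -t})]
              exact ENNReal.ofReal_le_ofReal hch2
        _ = ENNReal.ofReal (2 * K) := by
            rw [← ENNReal.ofReal_add hKnn hKnn]; congr 1; ring
    refine hbound.trans (ENNReal.ofReal_le_ofReal ?_)
    have hfc := final_core (V := (v:ℝ)) (t := t) hPpos hV ht
    rw [← hθdef] at hfc
    have hKle : K ≤ Real.exp (-t ^ 2 / (4 * (v:ℝ) * ((P:ℝ) * (v:ℝ) + t / 2))) := by
      rw [hK, hM]
      exact hfc
    nlinarith [hKle]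

end main
end
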